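/- Let γ be a real-valued random variable satisfying a ≤ γ ≤ b almost surely, where 0 < a < b. Let R > 1 and let n ≥ log(b/a)/log(4R − 3) be a positive integer. With the geometric partition ḡ_i = a^{1−i/n} b^{i/n}, I_i = [ḡ_{i−1}, ḡ_i) for i < n and I_n = [ḡ_{n−1}, b], assume P_i = P(γ ∈ I_i) > 0 for every i and set M_i = E[γ · 1_{I_i}(γ)]. Then E[1/γ] ≤ R · Σ_{i=1}^n P_i² / M_i. -/

import Mathlib

open MeasureTheory Real

set_option maxHeartbeats 1000000 in
/-- Logarithmic menu size suffices: if `n ≥ log(b/a)/log(4R−3)` with `R > 1`,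
then the `n`-group geometric partition guarantees a relative welfare loss of at
most the factor `R`: `E[1/γ] ≤ R · Σ_i P_i²/M_i`. -/
theorem stmt_11 {Ω : Type*} [MeasurableSpace Ω] (P : Measure Ω) [IsProbabilityMeasure P]
    (a b : ℝ) (ha : 0 < a) (hab : a < b)
    (γ : Ω → ℝ) (hγ : Measurable γ)
    (hbd : ∀ᵐ ω ∂P, γ ω ∈ Set.Icc a b)
    (R : ℝ) (hR : 1 < R)
    (n : ℕ) (hn : 1 ≤ n)
    (hnR : Real.log (b/a) / Real.log (4*R - 3) ≤ (n : ℝ))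
    (g : ℕ → ℝ)
    (hg : ∀ i : ℕ, g i = a ^ ((1 : ℝ) - (i : ℝ)/(n : ℝ)) * b ^ ((i : ℝ)/(n : ℝ)))
    (I : ℕ → Set ℝ)
    (hI : ∀ i : ℕ, 1 ≤ i → i < n → I i = Set.Ico (g (i-1)) (g i))
    (hIn : I n = Set.Icc (g (n-1)) b)
    (Pr : ℕ → ℝ) (hPr : ∀ i : ℕ, Pr i = (P (γ ⁻¹' I i)).toReal)
    (hPrpos : ∀ i ∈ Finset.Icc 1 n, 0 < Pr i)
    (M : ℕ → ℝ)
    (hM : ∀ i : ℕ, M i = ∫ ω, Set.indicator (I i) (fun x => x) (γ ω) ∂P) :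
    ∫ ω, 1 / γ ω ∂P ≤ R * ∑ i ∈ Finset.Icc 1 n, (Pr i)^2 / M i := by
  classical
  have hb : 0 < b := ha.trans hab
  have hba : 1 < b / a := (one_lt_div ha).2 hab
  have hba0 : 0 < b / a := by positivity
  have hnpos : 0 < (n : ℝ) := by exact_mod_cast hn
  obtain ⟨rt, hrt⟩ : ∃ r : ℝ, (b / a) ^ ((1 : ℝ) / (n : ℝ)) = r := ⟨_, rfl⟩
  have hrtpos : 0 < rt := hrt ▸ Real.rpow_pos_of_pos hba0 _
  have hrt1 : 1 < rt := hrt ▸ (Real.one_lt_rpow_iff_of_pos hba0).2 (Or.inl ⟨hba, by positivity⟩)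
  have hrtn : ∀ m : ℕ, (b / a) ^ ((m : ℝ) / (n : ℝ)) = rt ^ m := by
    intro m
    rw [← hrt, ← Real.rpow_natCast ((b/a) ^ ((1:ℝ)/(n:ℝ))) m, ← Real.rpow_mul hba0.le]
    congr 1; field_simp
  -- g i = a * rt ^ i
  have hgpow : ∀ i : ℕ, g i = a * rt ^ i := by
    intro i
    have h2 : (b / a) ^ ((i : ℝ) / (n : ℝ)) = b ^ ((i:ℝ)/(n:ℝ)) / a ^ ((i:ℝ)/(n:ℝ)) :=
      Real.div_rpow hb.le ha.le _
    have h3 : a ^ ((1 : ℝ) - (i : ℝ)/(n : ℝ)) = a / a ^ ((i:ℝ)/(n:ℝ)) := by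
      rw [Real.rpow_sub ha, Real.rpow_one]
    have hapos : 0 < a ^ ((i:ℝ)/(n:ℝ)) := Real.rpow_pos_of_pos ha _
    rw [hg i, h3, ← hrtn i, h2]
    field_simp
  have hg0 : g 0 = a := by simp [hgpow]
  have hrtnn : rt ^ n = b / a := by
    rw [← hrtn n, div_self (ne_of_gt hnpos), Real.rpow_one]
  have hgn : g n = b := by
    rw [hgpow, hrtnn]; field_simp
  have hgpos : ∀ i : ℕ, 0 < g i := fun i => by rw [hgpow]; positivity
  have hgmono : ∀ i j : ℕ, i ≤ j → g i ≤ g j := by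
    intro i j hij
    rw [hgpow, hgpow]
    exact mul_le_mul_of_nonneg_left (pow_le_pow_right₀ hrt1.le hij) ha.le
  have hgsucc : ∀ i : ℕ, 1 ≤ i → g i = rt * g (i - 1) := by
    intro i hi
    have hp : rt ^ i = rt * rt ^ (i - 1) := by
      conv_lhs => rw [show i = (i-1)+1 from (Nat.succ_pred_eq_of_pos hi).symm]
      rw [pow_succ]; ring
    rw [hgpow, hgpow, hp]; ring
  -- rt ≤ 4R - 3
  have hR4 : 1 < 4 * R - 3 := by linarith
  have hrtle : rt ≤ 4 * R - 3 := by
    have hlpos : 0 < Real.log (4 * R - 3) := Real.log_pos hR4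
    have hlog : Real.log (b / a) ≤ (n : ℝ) * Real.log (4 * R - 3) := by
      calc Real.log (b/a) = (Real.log (b/a) / Real.log (4*R-3)) * Real.log (4*R-3) := by
            field_simp
        _ ≤ (n : ℝ) * Real.log (4*R-3) := mul_le_mul_of_nonneg_right hnR hlpos.le
    have hban : b / a ≤ (4 * R - 3) ^ n := by
      have := Real.exp_le_exp.2 hlog
      rw [Real.exp_log hba0, Real.exp_nat_mul, Real.exp_log (by linarith : (0:ℝ) < 4*R-3)] at this
      exact this
    have hpow : rt ^ n ≤ (4 * R - 3) ^ n := by rw [hrtnn]; exact hban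
    exact le_of_pow_le_pow_left₀ (by omega) (by linarith) hpow
  -- measurability and basic facts about I i
  have hImeas : ∀ i : ℕ, 1 ≤ i → i ≤ n → MeasurableSet (I i) := by
    intro i h1 h2
    rcases lt_or_eq_of_le h2 with h | h
    · rw [hI i h1 h]; exact measurableSet_Ico
    · subst h; rw [hIn]; exact measurableSet_Icc
  have hIsub : ∀ i : ℕ, 1 ≤ i → i ≤ n → I i ⊆ Set.Icc (g (i-1)) (g i) := by
    intro i h1 h2
    rcases lt_or_eq_of_le h2 with h | h
    · rw [hI i h1 h]; exact Set.Ico_subset_Icc_self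
    · subst h; rw [hIn, hgn]
  have hlow : ∀ j : ℕ, 1 ≤ j → j ≤ n → ∀ x ∈ I j, g (j-1) ≤ x :=
    fun j h1 h2 x hx => (hIsub j h1 h2 hx).1
  have hupp : ∀ j : ℕ, 1 ≤ j → j < n → ∀ x ∈ I j, x < g j := by
    intro j h1 h2 x hx; rw [hI j h1 h2] at hx; exact hx.2
  -- covering with uniqueness
  have hcover : ∀ x : ℝ, a ≤ x → x ≤ b →
      ∃ i, 1 ≤ i ∧ i ≤ n ∧ x ∈ I i ∧ ∀ j, 1 ≤ j → j ≤ n → x ∈ I j → j = i := by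
    intro x hax hxb
    have huniq : ∀ i j, 1 ≤ i → i ≤ n → 1 ≤ j → j ≤ n → x ∈ I i → x ∈ I j → i = j := by
      intro i j hi1 hin hj1 hjn hxi hxj
      rcases Nat.lt_trichotomy i j with h | h | h
      · have h1 : x < g i := hupp i hi1 (lt_of_lt_of_le h hjn) x hxi
        have h2 : g (j-1) ≤ x := hlow j hj1 hjn x hxj
        have h3 : g i ≤ g (j-1) := hgmono i (j-1) (by omega)
        linarith
      · exact h
      · have h1 : x < g j := hupp j hj1 (lt_of_lt_of_le h hin) x hxj
        have h2 : g (i-1) ≤ x := hlow i hi1 hin x hxi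
        have h3 : g j ≤ g (i-1) := hgmono j (i-1) (by omega)
        linarith
    have hQ0 : g 0 ≤ x := by rw [hg0]; exact hax
    have hkQ : g (Nat.findGreatest (fun i => g i ≤ x) n) ≤ x :=
      Nat.findGreatest_spec (P := fun i => g i ≤ x) (Nat.zero_le n) hQ0
    set k := Nat.findGreatest (fun i => g i ≤ x) n with hk
    have hkn : k ≤ n := Nat.findGreatest_le n
    rcases lt_or_eq_of_le hkn with hklt | hkeq
    · have hnQ : ¬ (g (k+1) ≤ x) :=
        Nat.findGreatest_is_greatest (Nat.lt_succ_self k) (by omega)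
      have hxlt : x < g (k+1) := lt_of_not_ge hnQ
      have hmem : x ∈ I (k+1) := by
        rcases lt_or_eq_of_le (show k+1 ≤ n by omega) with h | h
        · rw [hI (k+1) (by omega) h]
          exact ⟨by simpa using hkQ, hxlt⟩
        · rw [h, hIn]
          refine ⟨?_, hxb⟩
          rw [show n - 1 = k by omega]
          exact hkQ
      exact ⟨k+1, by omega, by omega, hmem,
        fun j hj1 hjn hxj => huniq j (k+1) hj1 hjn (by omega) (by omega) hxj hmem⟩
    · have hmem : x ∈ I n := by
        rw [hIn]
        refine ⟨?_, hxb⟩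
        calc g (n-1) ≤ g n := hgmono (n-1) n (by omega)
          _ ≤ x := by rw [← hkeq]; exact hkQ
      exact ⟨n, hn, le_refl n, hmem,
        fun j hj1 hjn hxj => huniq j n hj1 hjn hn (le_refl n) hxj hmem⟩
  -- integrability helper
  have hind : ∀ (i : ℕ), 1 ≤ i → i ≤ n → ∀ (f : ℝ → ℝ), Measurable f →
      ∀ C : ℝ, 0 ≤ C → (∀ x ∈ I i, |f x| ≤ C) →
      Integrable (fun ω => Set.indicator (I i) f (γ ω)) P := by
    intro i h1 h2 f hf C hC0 hC
    have hmeas : Measurable (fun ω => Set.indicator (I i) f (γ ω)) :=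
      (hf.indicator (hImeas i h1 h2)).comp hγ
    refine Integrable.mono' (integrable_const C) hmeas.aestronglyMeasurable ?_
    filter_upwards with ω
    by_cases h : γ ω ∈ I i
    · rw [Set.indicator_of_mem h]; exact hC _ h
    · rw [Set.indicator_of_notMem h]; simpa using hC0
  -- per-interval bound
  have key : ∀ i ∈ Finset.Icc 1 n,
      (∫ ω, Set.indicator (I i) (fun x => x⁻¹) (γ ω) ∂P) ≤ R * (Pr i)^2 / M i := by
    intro i hi
    rw [Finset.mem_Icc] at hi
    obtain ⟨hi1, hin⟩ := hi
    obtain ⟨c, hc⟩ : ∃ c : ℝ, g (i-1) = c := ⟨_, rfl⟩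
    obtain ⟨d, hd⟩ : ∃ d : ℝ, g i = d := ⟨_, rfl⟩
    have hc0 : 0 < c := hc ▸ hgpos _
    have hd0 : 0 < d := hd ▸ hgpos _
    have hdc : d = rt * c := by rw [← hc, ← hd]; exact hgsucc i hi1
    have hcd : c ≤ d := by nlinarith
    have hsub : I i ⊆ Set.Icc c d := by rw [← hc, ← hd]; exact hIsub i hi1 hin
    have hcdR : (c + d)^2 ≤ 4 * R * (c * d) := by
      have h1 : 0 ≤ (rt - 1) * (4*R - 3 - rt) :=
        mul_nonneg (by linarith) (by linarith)
      have h2 : (1 + rt)^2 ≤ 4 * R * rt := by nlinarith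
      have h3 := mul_le_mul_of_nonneg_right h2 (sq_nonneg c)
      rw [hdc]; nlinarith [sq_nonneg c]
    have hmeasI := hImeas i hi1 hin
    -- integrability
    have hint_one : Integrable (fun ω => Set.indicator (I i) (fun _ => (1:ℝ)) (γ ω)) P :=
      hind i hi1 hin _ measurable_const 1 zero_le_one (fun x _ => by simp)
    have hint_id : Integrable (fun ω => Set.indicator (I i) (fun x => x) (γ ω)) P :=
      hind i hi1 hin _ measurable_id d hd0.le
        (fun x hx => by rw [abs_of_pos (lt_of_lt_of_le hc0 (hsub hx).1)]; exact (hsub hx).2)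
    have hint_inv : Integrable (fun ω => Set.indicator (I i) (fun x => x⁻¹) (γ ω)) P :=
      hind i hi1 hin _ measurable_inv c⁻¹ (inv_pos.2 hc0).le
        (fun x hx => by
          have hx0 : 0 < x := lt_of_lt_of_le hc0 (hsub hx).1
          rw [abs_of_pos (inv_pos.2 hx0)]
          exact inv_anti₀ hc0 (hsub hx).1)
    have hint_aff : Integrable (fun ω => Set.indicator (I i) (fun x => (c + d - x)/(c*d)) (γ ω)) P :=
      hind i hi1 hin _ (by fun_prop) ((c+d)/(c*d))
        (div_nonneg (by linarith) (mul_pos hc0 hd0).le)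
        (fun x hx => by
          have h1 := (hsub hx).1; have h2 := (hsub hx).2
          rw [abs_of_nonneg (div_nonneg (by linarith) (mul_pos hc0 hd0).le)]
          exact (div_le_div_iff_of_pos_right (mul_pos hc0 hd0)).2 (by linarith))
    -- Pr i as an integral
    have hPrI : (∫ ω, Set.indicator (I i) (fun _ => (1:ℝ)) (γ ω) ∂P) = Pr i := by
      have heq : (fun ω => Set.indicator (I i) (fun _ => (1:ℝ)) (γ ω))
          = Set.indicator (γ ⁻¹' I i) (fun _ => (1:ℝ)) := by
        ext ω; by_cases h : γ ω ∈ I i <;> simp [h, Set.indicator, Set.mem_preimage]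
      rw [heq, hPr i]
      exact integral_indicator_one (hγ hmeasI) (μ := P)
    have hPr0 : 0 < Pr i := hPrpos i (Finset.mem_Icc.2 ⟨hi1, hin⟩)
    -- bounds on M i
    have hMle : M i ≤ d * Pr i := by
      rw [hM i, ← hPrI, ← integral_const_mul]
      apply integral_mono hint_id (hint_one.const_mul d)
      intro ω
      by_cases h : γ ω ∈ I i
      · simp only [Set.indicator_of_mem h]; simpa using (hsub h).2
      · simp [Set.indicator_of_notMem h]
    have hMge : c * Pr i ≤ M i := by
      rw [hM i, ← hPrI, ← integral_const_mul]
      apply integral_mono (hint_one.const_mul c) hint_id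
      intro ω
      by_cases h : γ ω ∈ I i
      · simp only [Set.indicator_of_mem h]; simpa using (hsub h).1
      · simp [Set.indicator_of_notMem h]
    have hM0 : 0 < M i := lt_of_lt_of_le (mul_pos hc0 hPr0) hMge
    -- Kantorovich-type bound
    have hT : (∫ ω, Set.indicator (I i) (fun x => x⁻¹) (γ ω) ∂P)
        ≤ ((c + d) * Pr i - M i) / (c * d) := by
      have hstep : (∫ ω, Set.indicator (I i) (fun x => x⁻¹) (γ ω) ∂P)
          ≤ ∫ ω, Set.indicator (I i) (fun x => (c + d - x)/(c*d)) (γ ω) ∂P := by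
        apply integral_mono hint_inv hint_aff
        intro ω
        by_cases h : γ ω ∈ I i
        · simp only [Set.indicator_of_mem h]
          have h1 := (hsub h).1; have h2 := (hsub h).2
          have hx0 : 0 < γ ω := lt_of_lt_of_le hc0 h1
          rw [inv_eq_one_div, div_le_div_iff₀ hx0 (mul_pos hc0 hd0)]
          nlinarith [mul_nonneg (sub_nonneg.2 h1) (sub_nonneg.2 h2)]
        · simp [Set.indicator_of_notMem h]
      have hcomp : (∫ ω, Set.indicator (I i) (fun x => (c + d - x)/(c*d)) (γ ω) ∂P)
          = ((c + d) * Pr i - M i) / (c * d) := by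
        have heq : ∀ ω, Set.indicator (I i) (fun x => (c + d - x)/(c*d)) (γ ω)
            = ((c + d) * Set.indicator (I i) (fun _ => (1:ℝ)) (γ ω)
                - Set.indicator (I i) (fun x => x) (γ ω)) / (c*d) := by
          intro ω
          by_cases h : γ ω ∈ I i <;> simp [Set.indicator_of_mem, Set.indicator_of_notMem, h]
        rw [integral_congr_ae (Filter.Eventually.of_forall heq)]
        rw [integral_div, integral_sub (hint_one.const_mul _) hint_id,
          integral_const_mul, hPrI, ← hM i]
      rw [hcomp] at hstep
      exact hstep
    -- final arithmetic
    have hfin : ((c + d) * Pr i - M i) / (c * d) ≤ R * (Pr i)^2 / M i := by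
      rw [div_le_div_iff₀ (mul_pos hc0 hd0) hM0]
      nlinarith [sq_nonneg ((c+d) * Pr i - 2 * M i),
        mul_nonneg (sub_nonneg.2 hcdR) (sq_nonneg (Pr i))]
    exact hT.trans hfin
  -- decompose the integral
  have hsum : (∫ ω, 1 / γ ω ∂P)
      = ∑ i ∈ Finset.Icc 1 n, ∫ ω, Set.indicator (I i) (fun x => x⁻¹) (γ ω) ∂P := by
    have hae : ∀ᵐ ω ∂P, 1 / γ ω
        = ∑ i ∈ Finset.Icc 1 n, Set.indicator (I i) (fun x => x⁻¹) (γ ω) := by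
      filter_upwards [hbd] with ω hω
      obtain ⟨i₀, h1, h2, hmem, huniq⟩ := hcover (γ ω) hω.1 hω.2
      rw [Finset.sum_eq_single_of_mem i₀ (Finset.mem_Icc.2 ⟨h1, h2⟩)]
      · rw [Set.indicator_of_mem hmem, one_div]
      · intro j hj hne
        rw [Finset.mem_Icc] at hj
        apply Set.indicator_of_notMem
        intro hmemj
        exact hne (huniq j hj.1 hj.2 hmemj)
    rw [integral_congr_ae hae]
    apply integral_finset_sum
    intro i hi
    rw [Finset.mem_Icc] at hi
    have hc0 : 0 < g (i-1) := hgpos _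
    have hsub := hIsub i hi.1 hi.2
    exact hind i hi.1 hi.2 _ measurable_inv (g (i-1))⁻¹ (inv_pos.2 hc0).le
      (fun x hx => by
        have hx0 : 0 < x := lt_of_lt_of_le hc0 (hsub hx).1
        rw [abs_of_pos (inv_pos.2 hx0)]
        exact inv_anti₀ hc0 (hsub hx).1)
  rw [hsum, Finset.mul_sum]
  apply Finset.sum_le_sum
  intro i hi
  calc (∫ ω, Set.indicator (I i) (fun x => x⁻¹) (γ ω) ∂P) ≤ R * (Pr i)^2 / M i := key i hi
    _ = R * ((Pr i)^2 / M i) := by ring
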